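/- Let f be μ-strongly convex in y with L-Lipschitz gradient jointly in (x,y), and α ≤ 1/L. Define y^{t+1} = y^t − α∇_y f(x^t, y^t) and the hypergradient estimate ĝ = ∇_x f(x^t, y^{t+1}) − α∇_{xy} f(x^t, y^t)∇_y f(x^t, y^{t+1}). Then ‖ĝ − ∇Φ(x^t)‖ ≤ L(αL + 1)(1 − αμ)^{1/2} ‖y^t − y*(x^t)‖, where ∇Φ(x^t) = ∇_x f(x^t, y*(x^t)). -/

import Mathlib

open Set InnerProductSpace

set_option linter.unusedSectionVars false

local notation "⟪" x ", " y "⟫" => @inner ℝ _ _ x y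

section Aux

variable {E : Type*} [NormedAddCommGroup E] [InnerProductSpace ℝ E] [CompleteSpace E]

private lemma line_hasDerivAt (g : E → ℝ) (hg : Differentiable ℝ g) (b u : E) (t : ℝ) :
    HasDerivAt (fun s : ℝ => g (b + s • u)) ⟪gradient g (b + t • u), u⟫ t := by
  have h1 : HasFDerivAt g (toDual ℝ E (gradient g (b + t • u))) (b + t • u) :=
    (hg _).hasGradientAt.hasFDerivAt
  have h2 : HasDerivAt (fun s : ℝ => b + s • u) u t := by
    simpa using ((hasDerivAt_id t).smul_const u).const_add b
  exact h1.comp_hasDerivAt t h2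

private lemma convexOn_line {g : E → ℝ} (hc : ConvexOn ℝ univ g) (b u : E) :
    ConvexOn ℝ univ (fun s : ℝ => g (b + s • u)) := by
  have h := hc.comp_affineMap (AffineMap.lineMap b (b + u))
  rw [Set.preimage_univ] at h
  have heq : (fun s : ℝ => g (b + s • u)) = g ∘ (AffineMap.lineMap b (b + u)) := by
    funext s
    simp [AffineMap.lineMap_apply, add_sub_cancel_left, add_comm]
  rw [heq]; exact h

private lemma convex_first_order {g : E → ℝ} (hg : Differentiable ℝ g)
    (hc : ConvexOn ℝ univ g) (a b : E) :
    g b + ⟪gradient g b, a - b⟫ ≤ g a := by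
  set u := a - b with hu
  have hφ := convexOn_line hc b u
  have hd0 := line_hasDerivAt g hg b u 0
  have hslope := hφ.deriv_le_slope (mem_univ (0:ℝ)) (mem_univ (1:ℝ)) one_pos
    hd0.differentiableAt
  rw [hd0.deriv] at hslope
  rw [slope_def_field] at hslope
  have e1 : b + (0:ℝ) • u = b := by simp
  have e2 : b + (1:ℝ) • u = a := by simp [hu]
  rw [e1, e2] at hslope
  have h1 : (g a - g b) / (1 - 0 : ℝ) = g a - g b := by norm_num
  rw [h1] at hslope
  linarith

/-- Strong convexity first-order gap on gradients. -/
private lemma sc_inner {g : E → ℝ} {μ : ℝ} (hg : Differentiable ℝ g)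
    (hsc : StrongConvexOn univ μ g) (a b : E) :
    μ * ‖a - b‖ ^ 2 ≤ ⟪gradient g a - gradient g b, a - b⟫ := by
  set u := a - b with hu
  have hq : ConvexOn ℝ univ fun z : E => g z - μ / 2 * ‖z‖ ^ 2 :=
    strongConvexOn_iff_convex.mp hsc
  have hψc := convexOn_line hq b u
  -- derivative of the quadratic part along the line
  have hn : ∀ t : ℝ, HasDerivAt (fun s : ℝ => μ / 2 * ‖b + s • u‖ ^ 2)
      (μ / 2 * (2 * ⟪b, u⟫ + 2 * t * ‖u‖ ^ 2)) t := by
    intro t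
    have heq : (fun s : ℝ => μ / 2 * ‖b + s • u‖ ^ 2)
        = fun s : ℝ => μ / 2 * (‖b‖ ^ 2 + 2 * (s * ⟪b, u⟫) + s ^ 2 * ‖u‖ ^ 2) := by
      funext s
      rw [norm_add_sq_real, real_inner_smul_right, norm_smul, mul_pow, Real.norm_eq_abs, sq_abs]
    rw [heq]
    have hbase : HasDerivAt
        (fun s : ℝ => ‖b‖ ^ 2 + 2 * (s * ⟪b, u⟫) + s ^ 2 * ‖u‖ ^ 2)
        (0 + 2 * (1 * ⟪b, u⟫) + (↑2 * t ^ 1) * ‖u‖ ^ 2) t :=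
      ((hasDerivAt_const t _).add (((hasDerivAt_id t).mul_const _).const_mul 2)).add
        ((hasDerivAt_pow 2 t).mul_const _)
    have := hbase.const_mul (μ / 2)
    exact this.congr_deriv (by push_cast; ring)
  have hψd : ∀ t : ℝ, HasDerivAt
      (fun s : ℝ => g (b + s • u) - μ / 2 * ‖b + s • u‖ ^ 2)
      (⟪gradient g (b + t • u), u⟫ - μ / 2 * (2 * ⟪b, u⟫ + 2 * t * ‖u‖ ^ 2)) t :=
    fun t => (line_hasDerivAt g hg b u t).sub (hn t)
  have hψc' : ConvexOn ℝ univ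
      (fun s : ℝ => g (b + s • u) - μ / 2 * ‖b + s • u‖ ^ 2) := hψc
  have hlo := hψc'.deriv_le_slope (mem_univ (0:ℝ)) (mem_univ (1:ℝ)) one_pos
    (hψd 0).differentiableAt
  have hhi := hψc'.slope_le_deriv (mem_univ (0:ℝ)) (mem_univ (1:ℝ)) one_pos
    (hψd 1).differentiableAt
  rw [(hψd 0).deriv] at hlo
  rw [(hψd 1).deriv] at hhi
  have hkey : (⟪gradient g (b + (0:ℝ) • u), u⟫ : ℝ) - μ / 2 * (2 * ⟪b, u⟫ + 2 * 0 * ‖u‖ ^ 2)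
      ≤ ⟪gradient g (b + (1:ℝ) • u), u⟫ - μ / 2 * (2 * ⟪b, u⟫ + 2 * 1 * ‖u‖ ^ 2) :=
    le_trans hlo hhi
  have e1 : b + (0:ℝ) • u = b := by simp
  have e2 : b + (1:ℝ) • u = a := by simp [hu]
  rw [e1, e2] at hkey
  rw [inner_sub_left]
  have : (⟪gradient g a, u⟫ : ℝ) - ⟪gradient g b, u⟫ ≥ μ * ‖u‖ ^ 2 := by linarith
  linarith

/-- Descent lemma for an `L`-Lipschitz gradient. -/
private lemma descent {g : E → ℝ} {L : ℝ} (hg : Differentiable ℝ g) (hL : 0 ≤ L)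
    (hlip : ∀ p q : E, ‖gradient g p - gradient g q‖ ≤ L * ‖p - q‖) (a b : E) :
    g a ≤ g b + ⟪gradient g b, a - b⟫ + L / 2 * ‖a - b‖ ^ 2 := by
  set u := a - b with hu
  set ψ : ℝ → ℝ := fun s => g (b + s • u) - s * ⟪gradient g b, u⟫ - L / 2 * (s ^ 2 * ‖u‖ ^ 2)
    with hψ
  have hψd : ∀ t : ℝ, HasDerivAt ψ
      (⟪gradient g (b + t • u), u⟫ - ⟪gradient g b, u⟫ - L / 2 * (2 * t * ‖u‖ ^ 2)) t := by
    intro t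
    have h1 := line_hasDerivAt g hg b u t
    have h2 : HasDerivAt (fun s : ℝ => s * ⟪gradient g b, u⟫) ⟪gradient g b, u⟫ t := by
      simpa using (hasDerivAt_id t).mul_const (⟪gradient g b, u⟫ : ℝ)
    have h3 : HasDerivAt (fun s : ℝ => L / 2 * (s ^ 2 * ‖u‖ ^ 2))
        (L / 2 * (2 * t * ‖u‖ ^ 2)) t := by
      have := ((hasDerivAt_pow 2 t).mul_const (‖u‖ ^ 2)).const_mul (L / 2)
      exact this.congr_deriv (by push_cast; ring)
    exact (h1.sub h2).sub h3
  have hderiv_nonpos : ∀ t ∈ Ioo (0:ℝ) 1, deriv ψ t ≤ 0 := by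
    intro t ht
    rw [(hψd t).deriv]
    have hb : (⟪gradient g (b + t • u), u⟫ : ℝ) - ⟪gradient g b, u⟫ ≤ L * t * ‖u‖ ^ 2 := by
      have h1 : (⟪gradient g (b + t • u) - gradient g b, u⟫ : ℝ)
          ≤ ‖gradient g (b + t • u) - gradient g b‖ * ‖u‖ := real_inner_le_norm _ _
      have h2 := hlip (b + t • u) b
      have h3 : ‖b + t • u - b‖ = t * ‖u‖ := by
        rw [add_sub_cancel_left, norm_smul, Real.norm_eq_abs, abs_of_pos ht.1]
      rw [h3] at h2
      have h4 : ‖gradient g (b + t • u) - gradient g b‖ * ‖u‖ ≤ L * (t * ‖u‖) * ‖u‖ :=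
        mul_le_mul_of_nonneg_right h2 (norm_nonneg _)
      rw [inner_sub_left] at h1
      nlinarith [norm_nonneg u]
    nlinarith
  have hant : AntitoneOn ψ (Icc (0:ℝ) 1) := by
    apply antitoneOn_of_deriv_nonpos (convex_Icc 0 1)
    · exact fun t _ => ((hψd t).continuousAt).continuousWithinAt
    · intro t ht
      exact (hψd t).differentiableAt.differentiableWithinAt
    · intro t ht
      rw [interior_Icc] at ht
      exact hderiv_nonpos t ht
  have h01 := hant (left_mem_Icc.mpr zero_le_one) (right_mem_Icc.mpr zero_le_one) zero_le_one
  have e1 : ψ 0 = g b := by simp [hψ]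
  have e2 : ψ 1 = g (b + u) - ⟪gradient g b, u⟫ - L / 2 * ‖u‖ ^ 2 := by simp [hψ]
  have e3 : b + u = a := by simp [hu]
  rw [e1, e2, e3] at h01
  linarith

private lemma hasGradientAt_sub_inner {g : E → ℝ} (hg : Differentiable ℝ g) (v p : E) :
    HasGradientAt (fun q : E => g q - ⟪v, q⟫) (gradient g p - v) p := by
  have h1 : HasFDerivAt g (toDual ℝ E (gradient g p)) p := (hg p).hasGradientAt.hasFDerivAt
  have h2 : HasFDerivAt (fun q : E => (⟪v, q⟫ : ℝ)) (toDual ℝ E v) p := by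
    have h3 := (toDual ℝ E v).hasFDerivAt (x := p)
    exact h3.congr_of_eventuallyEq (Filter.Eventually.of_forall fun q =>
      (InnerProductSpace.toDual_apply_apply).symm)
  have h4 : HasFDerivAt (fun q : E => g q - ⟪v, q⟫) (toDual ℝ E (gradient g p - v)) p := by
    rw [map_sub]; exact h1.sub h2
  exact hasGradientAt_iff_hasFDerivAt.mpr h4

/-- Half-gap bound: `‖∇g z‖²/(2L) ≤ g z − g w` at a critical point `w` of a convex `g`. -/
private lemma halfgap {g : E → ℝ} {L : ℝ} (hg : Differentiable ℝ g)
    (hc : ConvexOn ℝ univ g) (hL : 0 < L)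
    (hlip : ∀ p q : E, ‖gradient g p - gradient g q‖ ≤ L * ‖p - q‖)
    (w : E) (hw : gradient g w = 0) (z : E) :
    1 / (2 * L) * ‖gradient g z‖ ^ 2 ≤ g z - g w := by
  set v := gradient g z with hv
  have hmin : g w ≤ g (z - (1 / L) • v) := by
    have := convex_first_order hg hc (z - (1 / L) • v) w
    rw [hw] at this
    simpa using this
  have hdes := descent hg hL.le hlip (z - (1 / L) • v) z
  have e1 : z - (1 / L) • v - z = -((1 / L) • v) := by abel
  rw [e1] at hdes
  have e2 : (⟪gradient g z, -((1 / L) • v)⟫ : ℝ) = -(1 / L) * ‖v‖ ^ 2 := by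
    rw [inner_neg_right, real_inner_smul_right, ← hv, real_inner_self_eq_norm_sq]
    ring
  have e3 : ‖-((1 / L) • v)‖ ^ 2 = (1 / L) ^ 2 * ‖v‖ ^ 2 := by
    rw [norm_neg, norm_smul, mul_pow, Real.norm_eq_abs, sq_abs]
  rw [e2, e3] at hdes
  have harith : (1 / L) * ‖v‖ ^ 2 - L / 2 * ((1 / L) ^ 2 * ‖v‖ ^ 2)
      = 1 / (2 * L) * ‖v‖ ^ 2 := by
    field_simp
    ring
  nlinarith [hdes, hmin]

/-- Cocoercivity at a critical point. -/
private lemma coco {g : E → ℝ} {L : ℝ} (hg : Differentiable ℝ g)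
    (hc : ConvexOn ℝ univ g) (hL : 0 < L)
    (hlip : ∀ p q : E, ‖gradient g p - gradient g q‖ ≤ L * ‖p - q‖)
    (w : E) (hw : gradient g w = 0) (z : E) :
    1 / L * ‖gradient g z‖ ^ 2 ≤ ⟪gradient g z, z - w⟫ := by
  set v := gradient g z with hv
  have P1 := halfgap hg hc hL hlip w hw z
  -- the tilted function
  set h : E → ℝ := fun q => g q - ⟪v, q⟫ with hh
  have hgh : Differentiable ℝ h := fun p => (hasGradientAt_sub_inner hg v p).differentiableAt
  have hgrad : ∀ p : E, gradient h p = gradient g p - v := fun p =>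
    (hasGradientAt_sub_inner hg v p).gradient
  have hch : ConvexOn ℝ univ h := by
    have hlin : ConcaveOn ℝ univ (fun q : E => (⟪v, q⟫ : ℝ)) := by
      exact ((innerSL ℝ v).toLinearMap).concaveOn convex_univ
    exact hc.sub hlin
  have hliph : ∀ p q : E, ‖gradient h p - gradient h q‖ ≤ L * ‖p - q‖ := by
    intro p q
    rw [hgrad p, hgrad q, sub_sub_sub_cancel_right]
    exact hlip p q
  have hhz : gradient h z = 0 := by rw [hgrad z, ← hv, sub_self]
  have P2 := halfgap hgh hch hL hliph z hhz w
  rw [hgrad w, hw, zero_sub, norm_neg] at P2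
  have e : h w - h z = g w - g z + ⟪v, z - w⟫ := by
    simp only [hh, inner_sub_right]
    ring
  rw [e] at P2
  have harith : 1 / (2 * L) * ‖v‖ ^ 2 + 1 / (2 * L) * ‖v‖ ^ 2 = 1 / L * ‖v‖ ^ 2 := by
    field_simp
    ring
  linarith

/-- One-step gradient-descent contraction for a strongly convex function. -/
private lemma contract {g : E → ℝ} {μ L α : ℝ} (hg : Differentiable ℝ g)
    (hsc : StrongConvexOn univ μ g) (hμ : 0 < μ) (hL : 0 < L) (hα : 0 < α) (hαL : α ≤ 1 / L)
    (hlip : ∀ p q : E, ‖gradient g p - gradient g q‖ ≤ L * ‖p - q‖)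
    (w : E) (hw : gradient g w = 0) (z : E) :
    ‖z - α • gradient g z - w‖ ≤ Real.sqrt (1 - α * μ) * ‖z - w‖ := by
  by_cases hzw : z = w
  · subst hzw
    simp [hw]
  have hc : ConvexOn ℝ univ g := (hsc.strictConvexOn hμ).convexOn
  set v := gradient g z with hv
  set e := z - w with he
  have hsci : μ * ‖e‖ ^ 2 ≤ ⟪v, e⟫ := by
    have := sc_inner hg hsc z w
    rwa [hw, sub_zero] at this
  have hcc : 1 / L * ‖v‖ ^ 2 ≤ ⟪v, e⟫ := coco hg hc hL hlip w hw z
  have hvb : ‖v‖ ≤ L * ‖e‖ := by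
    have := hlip z w
    rwa [hw, sub_zero] at this
  have hepos : 0 < ‖e‖ := norm_pos_iff.mpr (sub_ne_zero.mpr hzw)
  have hμL : μ ≤ L := by
    have h1 : (⟪v, e⟫ : ℝ) ≤ ‖v‖ * ‖e‖ := real_inner_le_norm _ _
    have h2 : ‖v‖ * ‖e‖ ≤ L * ‖e‖ * ‖e‖ := mul_le_mul_of_nonneg_right hvb (norm_nonneg e)
    have h3 : μ * ‖e‖ ^ 2 ≤ L * ‖e‖ ^ 2 := by nlinarith [hsci, h1, h2]
    exact le_of_mul_le_mul_right h3 (pow_pos hepos 2)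
  have hαL1 : α * L ≤ 1 := by
    rw [le_div_iff₀ hL] at hαL
    exact hαL
  have h1αμ : 0 ≤ 1 - α * μ := by nlinarith
  have hze : z - α • v - w = e - α • v := by rw [he, sub_right_comm]
  have hexp : ‖e - α • v‖ ^ 2 = ‖e‖ ^ 2 - 2 * (α * ⟪v, e⟫) + α ^ 2 * ‖v‖ ^ 2 := by
    rw [norm_sub_sq_real, real_inner_smul_right, norm_smul, mul_pow, Real.norm_eq_abs,
      sq_abs, real_inner_comm]
  have hα2 : α ^ 2 * ‖v‖ ^ 2 ≤ α * (1 / L * ‖v‖ ^ 2) := by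
    have : α * α ≤ α * (1 / L) := mul_le_mul_of_nonneg_left hαL hα.le
    nlinarith [sq_nonneg ‖v‖]
  have hsq : ‖e - α • v‖ ^ 2 ≤ (1 - α * μ) * ‖e‖ ^ 2 := by
    rw [hexp]
    nlinarith [mul_le_mul_of_nonneg_left hsci hα.le, mul_le_mul_of_nonneg_left hcc hα.le]
  calc ‖z - α • v - w‖ = Real.sqrt (‖e - α • v‖ ^ 2) := by
        rw [hze, Real.sqrt_sq (norm_nonneg _)]
    _ ≤ Real.sqrt ((1 - α * μ) * ‖e‖ ^ 2) := Real.sqrt_le_sqrt hsq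
    _ = Real.sqrt (1 - α * μ) * ‖e‖ := by
        rw [Real.sqrt_mul h1αμ, Real.sqrt_sq (norm_nonneg _)]

end Aux

/-- Hypergradient bias bound: the estimate
`ĝ = ∇_x f(x,y⁺) − α ∇_{xy} f(x,y) ∇_y f(x,y⁺)` with `y⁺ = y − α∇_y f(x,y)`
satisfies `‖ĝ − ∇Φ(x)‖ ≤ L(αL+1)√(1−αμ) ‖y − y*(x)‖`. -/
theorem hypergradient_bias {m n : ℕ}
    (f : EuclideanSpace ℝ (Fin m) → EuclideanSpace ℝ (Fin n) → ℝ)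
    (μ L α : ℝ) (hμ : 0 < μ) (hL : 0 < L) (hα : 0 < α) (hαL : α ≤ 1 / L)
    (hdiff : ContDiff ℝ 2 (fun p : EuclideanSpace ℝ (Fin m) × EuclideanSpace ℝ (Fin n) => f p.1 p.2))
    (hsc : ∀ x, StrongConvexOn Set.univ μ (f x))
    (hlipy : ∀ x₁ x₂ y₁ y₂,
      ‖gradient (f x₁) y₁ - gradient (f x₂) y₂‖ ≤
        L * Real.sqrt (‖x₁ - x₂‖ ^ 2 + ‖y₁ - y₂‖ ^ 2))
    (hlipx : ∀ x₁ x₂ y₁ y₂,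
      ‖gradient (fun x => f x y₁) x₁ - gradient (fun x => f x y₂) x₂‖ ≤
        L * Real.sqrt (‖x₁ - x₂‖ ^ 2 + ‖y₁ - y₂‖ ^ 2))
    (ystar : EuclideanSpace ℝ (Fin m) → EuclideanSpace ℝ (Fin n))
    (hmin : ∀ x, IsMinOn (f x) Set.univ (ystar x))
    (x : EuclideanSpace ℝ (Fin m)) (y y' : EuclideanSpace ℝ (Fin n))
    (Mxy : EuclideanSpace ℝ (Fin n) →L[ℝ] EuclideanSpace ℝ (Fin m))
    -- `Mxy` is the mixed second derivative `∇_{xy} f(x, y)`, bounded by `L`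
    (hMxy : Mxy = ContinuousLinearMap.adjoint
      (fderiv ℝ (fun x' => gradient (f x') y) x))
    (hMbound : ‖Mxy‖ ≤ L)
    (hy' : y' = y - α • gradient (f x) y) :
    ‖(gradient (fun x' => f x' y') x - α • Mxy (gradient (f x) y')) -
        gradient (fun x' => f x' (ystar x)) x‖ ≤
      L * (α * L + 1) * Real.sqrt (1 - α * μ) * ‖y - ystar x‖ := by
  have hg : Differentiable ℝ (f x) := by
    have hcomp : (fun y0 : EuclideanSpace ℝ (Fin n) => f x y0)
        = (fun p : EuclideanSpace ℝ (Fin m) × EuclideanSpace ℝ (Fin n) => f p.1 p.2)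
          ∘ (fun y0 : EuclideanSpace ℝ (Fin n) => (x, y0)) := rfl
    have h2 : ContDiff ℝ 2 (fun y0 : EuclideanSpace ℝ (Fin n) => f x y0) := by
      rw [hcomp]
      exact hdiff.comp ((contDiff_const (c := x)).prodMk contDiff_id)
    exact h2.differentiable (by norm_num)
  have hlipg : ∀ p q, ‖gradient (f x) p - gradient (f x) q‖ ≤ L * ‖p - q‖ := by
    intro p q
    have h := hlipy x x p q
    simpa [sub_self, Real.sqrt_sq (norm_nonneg (p - q))] using h
  have hgw : gradient (f x) (ystar x) = 0 := by
    have hloc : IsLocalMin (f x) (ystar x) := (hmin x).isLocalMin Filter.univ_mem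
    have hfd := hloc.fderiv_eq_zero
    simp [gradient, hfd]
  have hcontr : ‖y' - ystar x‖ ≤ Real.sqrt (1 - α * μ) * ‖y - ystar x‖ := by
    rw [hy']
    exact contract hg (hsc x) hμ hL hα hαL hlipg (ystar x) hgw y
  set A := gradient (fun x' => f x' y') x with hA
  set B := gradient (fun x' => f x' (ystar x)) x with hB
  set v' := gradient (f x) y' with hv'
  have hvy' : ‖v'‖ ≤ L * ‖y' - ystar x‖ := by
    have h := hlipg y' (ystar x)
    rwa [hgw, sub_zero] at h
  have hAB : ‖A - B‖ ≤ L * ‖y' - ystar x‖ := by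
    have h := hlipx x x y' (ystar x)
    simpa [sub_self, Real.sqrt_sq (norm_nonneg (y' - ystar x))] using h
  have hM : ‖Mxy v'‖ ≤ L * ‖v'‖ := Mxy.le_of_opNorm_le hMbound v'
  have key : ‖(A - α • Mxy v') - B‖ ≤ ‖A - B‖ + α * ‖Mxy v'‖ := by
    have hre : (A - α • Mxy v') - B = (A - B) - α • Mxy v' := by
      rw [sub_right_comm]
    rw [hre]
    refine (norm_sub_le _ _).trans ?_
    rw [norm_smul, Real.norm_eq_abs, abs_of_pos hα]
  have h2 : ‖(A - α • Mxy v') - B‖ ≤ (L + α * L * L) * ‖y' - ystar x‖ := by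
    have h1 : α * ‖Mxy v'‖ ≤ α * (L * ‖v'‖) := mul_le_mul_of_nonneg_left hM hα.le
    have h1' : α * (L * ‖v'‖) ≤ α * (L * (L * ‖y' - ystar x‖)) :=
      mul_le_mul_of_nonneg_left (mul_le_mul_of_nonneg_left hvy' hL.le) hα.le
    have e : (L + α * L * L) * ‖y' - ystar x‖
        = L * ‖y' - ystar x‖ + α * (L * (L * ‖y' - ystar x‖)) := by ring
    linarith [key, hAB, h1, h1', e]
  have h3 : (L + α * L * L) * ‖y' - ystar x‖
      ≤ (L + α * L * L) * (Real.sqrt (1 - α * μ) * ‖y - ystar x‖) :=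
    mul_le_mul_of_nonneg_left hcontr (by positivity)
  calc ‖(A - α • Mxy v') - B‖ ≤ (L + α * L * L) * ‖y' - ystar x‖ := h2
    _ ≤ (L + α * L * L) * (Real.sqrt (1 - α * μ) * ‖y - ystar x‖) := h3
    _ = L * (α * L + 1) * Real.sqrt (1 - α * μ) * ‖y - ystar x‖ := by ring
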